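/- Let n be a positive integer, F = 𝔽_{2^n}, R = W₂(F), and let f : F → F be a pseudo-planar function with f(0) = 0. Then: (i) for every g ∈ S₃, the number of ordered pairs (x,y) ∈ S₁ × S₁ with x + y = g equals 1; (ii) for every g ∈ R with g ∉ S₃, the number of ordered pairs (x,y) ∈ S₁ × S₁ with x + y = g equals 0 or 2. -/
import Mathlib


open scoped Classical

noncomputable section

/-- The Galois ring `GR(4,n)`, realized as length-2 2-typical truncated Witt vectors
over `F = 𝔽_{2^n}`. -/
abbrev GR (n : ℕ) : Type := TruncatedWittVector 2 2 (GaloisField 2 n)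

/-- The truncated Teichmüller lift `τ : F → W₂(F)`. -/
def teich (n : ℕ) (x : GaloisField 2 n) : GR n :=
  WittVector.truncate 2 (WittVector.teichmuller 2 x)

/-- The lifted set `D_f = {τ(x) + 2·τ(f(x)^(2^(n-1))) : x ∈ F} ⊆ GR(4,n)`. -/
def Dset (n : ℕ) (f : GaloisField 2 n → GaloisField 2 n) : Set (GR n) :=
  {g | ∃ x : GaloisField 2 n, g = teich n x + 2 * teich n (f x ^ 2 ^ (n - 1))}

/-- `S₁ = D_f \ {0}`. -/
def S1 (n : ℕ) (f : GaloisField 2 n → GaloisField 2 n) : Set (GR n) :=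
  Dset n f \ {0}

/-- `S₂ = {−s : s ∈ S₁}`. -/
def S2 (n : ℕ) (f : GaloisField 2 n → GaloisField 2 n) : Set (GR n) :=
  (fun s => -s) '' S1 n f

/-- `S₃ = 2R \ {0}`. -/
def S3 (n : ℕ) : Set (GR n) :=
  {g | ∃ x : GR n, g = 2 * x} \ {0}

/-- `S₄`: the elements outside `S₀ ∪ S₁ ∪ S₂ ∪ S₃` appearing in the multiset `D_f²`. -/
def S4 (n : ℕ) (f : GaloisField 2 n → GaloisField 2 n) : Set (GR n) :=
  {g | g ∉ ({0} : Set (GR n)) ∪ S1 n f ∪ S2 n f ∪ S3 n ∧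
    ∃ x ∈ Dset n f, ∃ y ∈ Dset n f, g = x + y}

/-- `S₅`: the remaining elements. -/
def S5 (n : ℕ) (f : GaloisField 2 n → GaloisField 2 n) : Set (GR n) :=
  {g | g ∉ ({0} : Set (GR n)) ∪ S1 n f ∪ S2 n f ∪ S3 n ∪ S4 n f}

section WittAux

open WittVector

private theorem ghost1' {R : Type*} [CommRing R] (w : WittVector 2 R) :
    ghostComponent 1 w = w.coeff 0 ^ 2 + 2 * w.coeff 1 := by
  rw [ghostComponent_apply, wittPolynomial]
  simp [Finset.sum_range_succ, MvPolynomial.aeval_monomial]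

private theorem wadd_coeff_one' {R : Type*} [CommRing R] (x y : WittVector 2 R) :
    (x + y).coeff 1 = x.coeff 1 + y.coeff 1 - x.coeff 0 * y.coeff 0 := by
  set A := MvPolynomial (Fin 2 × ℕ) ℤ
  set Xv : WittVector 2 A := WittVector.mk 2 (fun i => MvPolynomial.X (0, i)) with hXv
  set Yv : WittVector 2 A := WittVector.mk 2 (fun i => MvPolynomial.X (1, i)) with hYv
  have key : (Xv + Yv).coeff 1 = Xv.coeff 1 + Yv.coeff 1 - Xv.coeff 0 * Yv.coeff 0 := by
    have hg : ghostComponent 1 (Xv + Yv) = ghostComponent 1 Xv + ghostComponent 1 Yv :=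
      map_add _ _ _
    rw [ghost1', ghost1', ghost1', add_coeff_zero] at hg
    have h2 : (2 : A) ≠ 0 := two_ne_zero
    apply mul_left_cancel₀ h2
    linear_combination hg
  set φ : A →+* R :=
    (MvPolynomial.aeval (fun q : Fin 2 × ℕ => if q.1 = 0 then x.coeff q.2 else y.coeff q.2)).toRingHom with hφ
  have hmX : WittVector.map φ Xv = x := by
    ext m
    rw [map_coeff]
    simp only [hXv, hYv, WittVector.coeff_mk, hφ, AlgHom.toRingHom_eq_coe, RingHom.coe_coe]
    rw [MvPolynomial.aeval_X]
    norm_num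
  have hmY : WittVector.map φ Yv = y := by
    ext m
    rw [map_coeff]
    simp only [hXv, hYv, WittVector.coeff_mk, hφ, AlgHom.toRingHom_eq_coe, RingHom.coe_coe]
    rw [MvPolynomial.aeval_X]
    norm_num
  have hηkey := congrArg φ key
  rw [map_sub, map_add, map_mul] at hηkey
  have hc : ∀ (w : WittVector 2 A) (k : ℕ), φ (w.coeff k) = (WittVector.map φ w).coeff k := by
    intro w k; rw [map_coeff]
  rw [hc, hc, hc, hc, hc] at hηkey
  rw [map_add, hmX, hmY] at hηkey
  exact hηkey

end WittAux

section GRAux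

variable {n : ℕ}

private theorem grext {a b : GR n} (h0 : a.coeff 0 = b.coeff 0)
    (h1 : a.coeff 1 = b.coeff 1) : a = b := by
  apply TruncatedWittVector.ext
  intro i
  fin_cases i
  · exact h0
  · exact h1

private theorem gr_zero0 : (0 : GR n).coeff 0 = 0 := TruncatedWittVector.coeff_zero 2 2 _ _
private theorem gr_zero1 : (0 : GR n).coeff 1 = 0 := TruncatedWittVector.coeff_zero 2 2 _ _

private theorem gr_add0 (a b : GR n) : (a + b).coeff 0 = a.coeff 0 + b.coeff 0 := by
  obtain ⟨u, rfl⟩ := WittVector.truncate_surjective 2 2 (GaloisField 2 n) a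
  obtain ⟨v, rfl⟩ := WittVector.truncate_surjective 2 2 (GaloisField 2 n) b
  rw [← map_add, WittVector.coeff_truncate, WittVector.coeff_truncate, WittVector.coeff_truncate]
  exact WittVector.add_coeff_zero u v

private theorem gr_add1 (a b : GR n) :
    (a + b).coeff 1 = a.coeff 1 + b.coeff 1 + a.coeff 0 * b.coeff 0 := by
  obtain ⟨u, rfl⟩ := WittVector.truncate_surjective 2 2 (GaloisField 2 n) a
  obtain ⟨v, rfl⟩ := WittVector.truncate_surjective 2 2 (GaloisField 2 n) b
  rw [← map_add]
  rw [WittVector.coeff_truncate, WittVector.coeff_truncate, WittVector.coeff_truncate,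
    WittVector.coeff_truncate, WittVector.coeff_truncate]
  have := wadd_coeff_one' u v
  simp only [Fin.val_zero, Fin.val_one]
  rw [this]
  have h2 : (2 : GaloisField 2 n) = 0 := by
    have := CharP.cast_eq_zero (GaloisField 2 n) 2
    exact_mod_cast this
  ring_nf
  linear_combination (- (u.coeff 0 * v.coeff 0)) * h2

private theorem gr_teich0 (x : GaloisField 2 n) : (teich n x).coeff 0 = x := by
  rw [teich, WittVector.coeff_truncate]
  exact WittVector.teichmuller_coeff_zero 2 x

private theorem gr_teich1 (x : GaloisField 2 n) : (teich n x).coeff 1 = 0 := by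
  rw [teich, WittVector.coeff_truncate]
  exact WittVector.teichmuller_coeff_pos 2 x 1 one_pos

private theorem gr_two0 (a : GR n) : (2 * a).coeff 0 = 0 := by
  rw [two_mul, gr_add0]
  have h2 : (2 : GaloisField 2 n) = 0 := by
    have := CharP.cast_eq_zero (GaloisField 2 n) 2
    exact_mod_cast this
  linear_combination a.coeff 0 * h2

private theorem gr_two1 (a : GR n) : (2 * a).coeff 1 = a.coeff 0 ^ 2 := by
  rw [two_mul, gr_add1]
  have h2 : (2 : GaloisField 2 n) = 0 := by
    have := CharP.cast_eq_zero (GaloisField 2 n) 2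
    exact_mod_cast this
  linear_combination (a.coeff 1) * h2

end GRAux


section MemAux

variable {n : ℕ}

private theorem fchar2 : (2 : GaloisField 2 n) = 0 := by
  have := CharP.cast_eq_zero (GaloisField 2 n) 2
  exact_mod_cast this

private theorem fsq (hn : 0 < n) (a : GaloisField 2 n) : (a ^ 2 ^ (n - 1)) ^ 2 = a := by
  letI : Fintype (GaloisField 2 n) := Fintype.ofFinite _
  have hcard : Fintype.card (GaloisField 2 n) = 2 ^ n := by
    rw [← Nat.card_eq_fintype_card]
    exact GaloisField.card 2 n hn.ne'
  rw [← pow_mul]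
  have : 2 ^ (n - 1) * 2 = 2 ^ n := by
    rw [← pow_succ]
    congr 1
    omega
  rw [this, ← hcard]
  exact FiniteField.pow_card a

private theorem gr_eq_zero_iff (g : GR n) : g = 0 ↔ g.coeff 0 = 0 ∧ g.coeff 1 = 0 := by
  constructor
  · rintro rfl
    exact ⟨gr_zero0, gr_zero1⟩
  · rintro ⟨h0, h1⟩
    exact grext (by rw [h0, gr_zero0]) (by rw [h1, gr_zero1])

private theorem mem_Dset_iff (hn : 0 < n) (f : GaloisField 2 n → GaloisField 2 n) (g : GR n) :
    g ∈ Dset n f ↔ g.coeff 1 = f (g.coeff 0) := by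
  constructor
  · rintro ⟨x, rfl⟩
    have h0 : (teich n x + 2 * teich n (f x ^ 2 ^ (n - 1))).coeff 0 = x := by
      rw [gr_add0, gr_teich0, gr_two0, add_zero]
    have h1 : (teich n x + 2 * teich n (f x ^ 2 ^ (n - 1))).coeff 1 = f x := by
      rw [gr_add1, gr_teich1, gr_two1, gr_teich0, gr_two0, gr_teich0, fsq hn]
      ring
    rw [h0, h1]
  · intro h
    refine ⟨g.coeff 0, ?_⟩
    refine (grext ?_ ?_).symm
    · rw [gr_add0, gr_teich0, gr_two0, add_zero]
    · rw [gr_add1, gr_teich1, gr_two1, gr_teich0, gr_two0, gr_teich0, fsq hn]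
      rw [h]; ring

private theorem mem_S1_iff (hn : 0 < n) (f : GaloisField 2 n → GaloisField 2 n)
    (hf0 : f 0 = 0) (g : GR n) :
    g ∈ S1 n f ↔ g.coeff 1 = f (g.coeff 0) ∧ g.coeff 0 ≠ 0 := by
  rw [S1, Set.mem_diff, Set.mem_singleton_iff, mem_Dset_iff hn, gr_eq_zero_iff]
  constructor
  · rintro ⟨h1, h2⟩
    refine ⟨h1, fun h0 => h2 ⟨h0, by rw [h1, h0, hf0]⟩⟩
  · rintro ⟨h1, h2⟩
    exact ⟨h1, fun hc => h2 hc.1⟩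

private theorem mem_S3_iff (hn : 0 < n) (g : GR n) :
    g ∈ S3 n ↔ g.coeff 0 = 0 ∧ g.coeff 1 ≠ 0 := by
  rw [S3, Set.mem_diff, Set.mem_singleton_iff, gr_eq_zero_iff]
  constructor
  · rintro ⟨⟨x, rfl⟩, h2⟩
    have h0 : (2 * x).coeff 0 = 0 := gr_two0 x
    exact ⟨h0, fun h1 => h2 ⟨h0, h1⟩⟩
  · rintro ⟨h0, h1⟩
    constructor
    · refine ⟨teich n (g.coeff 1 ^ 2 ^ (n - 1)), ?_⟩
      refine grext ?_ ?_
      · rw [h0, gr_two0]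
      · rw [gr_two1, gr_teich0, fsq hn]
    · rintro ⟨_, hc⟩
      exact h1 hc

end MemAux


section KeyAux

variable {n : ℕ}

/-- Key field lemma: the symmetric difference function is 2-to-1. -/
private theorem key2to1 (f : GaloisField 2 n → GaloisField 2 n)
    (hpp : ∀ ε : GaloisField 2 n, ε ≠ 0 →
      Function.Bijective (fun x => f (x + ε) + f x + ε * x))
    (ε : GaloisField 2 n) (hε : ε ≠ 0) (x z : GaloisField 2 n)
    (h : f x + f (x + ε) + x * (x + ε) = f z + f (z + ε) + z * (z + ε)) :
    z = x ∨ z = x + ε := by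
  by_cases hzx : z = x
  · exact Or.inl hzx
  by_cases hz2 : z = x + ε
  · exact Or.inr hz2
  exfalso
  have h2 : (2 : GaloisField 2 n) = 0 := fchar2
  have hδ : x + z ≠ 0 := by
    intro hc
    exact hzx (by linear_combination -hc + z * h2)
  have hγ : x + z + ε ≠ 0 := by
    intro hc
    exact hz2 (by linear_combination -hc + z * h2)
  have hinj := (hpp (x + z) hδ).injective
  have e1 : x + (x + z) = z := by linear_combination x * h2
  have e2 : (x + ((x + z) + ε)) + (x + z) = x + ε := by linear_combination (x + z) * h2
  have e3 : x + ((x + z) + ε) = z + ε := by linear_combination x * h2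
  have hψ : (fun w => f (w + (x + z)) + f w + (x + z) * w) x
      = (fun w => f (w + (x + z)) + f w + (x + z) * w) (x + ((x + z) + ε)) := by
    simp only
    rw [e1, e2, e3]
    linear_combination h + (f z - f (x + ε) - x * ε) * h2
  have := hinj hψ
  apply hγ
  linear_combination -this

/-- Translation of the pair-counting subtype to a field-solution subtype. -/
private def solEquiv (hn : 0 < n) (f : GaloisField 2 n → GaloisField 2 n)
    (hf0 : f 0 = 0) (g : GR n) :
    {p : GR n × GR n // p.1 ∈ S1 n f ∧ p.2 ∈ S1 n f ∧ p.1 + p.2 = g} ≃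
    {x : GaloisField 2 n // x ≠ 0 ∧ x + g.coeff 0 ≠ 0 ∧
      f x + f (x + g.coeff 0) + x * (x + g.coeff 0) = g.coeff 1} where
  toFun p := by
    refine ⟨p.1.1.coeff 0, ?_, ?_, ?_⟩
    · exact ((mem_S1_iff hn f hf0 _).mp p.2.1).2
    · have hb := (mem_S1_iff hn f hf0 _).mp p.2.2.1
      have hsum0 : p.1.1.coeff 0 + p.1.2.coeff 0 = g.coeff 0 := by
        rw [← gr_add0, p.2.2.2]
      have : p.1.1.coeff 0 + g.coeff 0 = p.1.2.coeff 0 := by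
        linear_combination hsum0 + (g.coeff 0 - p.1.2.coeff 0) * (fchar2 (n := n))
      rw [this]
      exact hb.2
    · have ha := (mem_S1_iff hn f hf0 _).mp p.2.1
      have hb := (mem_S1_iff hn f hf0 _).mp p.2.2.1
      have hsum0 : p.1.1.coeff 0 + p.1.2.coeff 0 = g.coeff 0 := by
        rw [← gr_add0, p.2.2.2]
      have hb0 : p.1.1.coeff 0 + g.coeff 0 = p.1.2.coeff 0 := by
        linear_combination hsum0 + (g.coeff 0 - p.1.2.coeff 0) * (fchar2 (n := n))
      have hsum1 : p.1.1.coeff 1 + p.1.2.coeff 1 + p.1.1.coeff 0 * p.1.2.coeff 0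
          = g.coeff 1 := by
        rw [← gr_add1, p.2.2.2]
      rw [hb0]
      rw [ha.1, hb.1] at hsum1
      exact hsum1
  invFun x := by
    refine ⟨(teich n x.1 + 2 * teich n (f x.1 ^ 2 ^ (n - 1)),
      teich n (x.1 + g.coeff 0) + 2 * teich n (f (x.1 + g.coeff 0) ^ 2 ^ (n - 1))), ?_, ?_, ?_⟩
    · rw [mem_S1_iff hn f hf0]
      constructor
      · rw [gr_add0, gr_add1, gr_teich0, gr_teich1, gr_two0, gr_two1, gr_teich0, fsq hn,
          add_zero]
        ring
      · rw [gr_add0, gr_teich0, gr_two0, add_zero]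
        exact x.2.1
    · rw [mem_S1_iff hn f hf0]
      constructor
      · rw [gr_add0, gr_add1, gr_teich0, gr_teich1, gr_two0, gr_two1, gr_teich0, fsq hn,
          add_zero]
        ring
      · rw [gr_add0, gr_teich0, gr_two0, add_zero]
        exact x.2.2.1
    · refine grext ?_ ?_
      · rw [gr_add0, gr_add0, gr_add0, gr_teich0, gr_teich0, gr_two0, gr_two0, add_zero,
          add_zero]
        linear_combination x.1 * (fchar2 (n := n))
      · rw [gr_add1, gr_add0, gr_add0, gr_add1, gr_add1, gr_teich0, gr_teich0, gr_teich1,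
          gr_teich1, gr_two0, gr_two0, gr_two1, gr_two1, gr_teich0, gr_teich0,
          fsq hn, fsq hn]
        have := x.2.2.2
        linear_combination this
  left_inv p := by
    apply Subtype.ext
    have ha := (mem_S1_iff hn f hf0 _).mp p.2.1
    have hb := (mem_S1_iff hn f hf0 _).mp p.2.2.1
    have hsum0 : p.1.1.coeff 0 + p.1.2.coeff 0 = g.coeff 0 := by
      rw [← gr_add0, p.2.2.2]
    have hb0 : p.1.1.coeff 0 + g.coeff 0 = p.1.2.coeff 0 := by
      linear_combination hsum0 + (g.coeff 0 - p.1.2.coeff 0) * (fchar2 (n := n))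
    have hfst : teich n (p.1.1.coeff 0) + 2 * teich n (f (p.1.1.coeff 0) ^ 2 ^ (n - 1))
        = p.1.1 := by
      refine grext ?_ ?_
      · rw [gr_add0, gr_teich0, gr_two0, add_zero]
      · rw [gr_add1, gr_teich1, gr_two1, gr_teich0, gr_two0, gr_teich0, fsq hn, ha.1]
        ring
    have hsnd : teich n (p.1.1.coeff 0 + g.coeff 0)
        + 2 * teich n (f (p.1.1.coeff 0 + g.coeff 0) ^ 2 ^ (n - 1)) = p.1.2 := by
      rw [hb0]
      refine grext ?_ ?_
      · rw [gr_add0, gr_teich0, gr_two0, add_zero]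
      · rw [gr_add1, gr_teich1, gr_two1, gr_teich0, gr_two0, gr_teich0, fsq hn, hb.1]
        ring
    exact Prod.ext hfst hsnd
  right_inv x := by
    apply Subtype.ext
    simp only
    rw [gr_add0, gr_teich0, gr_two0, add_zero]

end KeyAux

/-- **Lemma (sums of `S₁`).** For a pseudo-planar function `f` on `F = 𝔽_{2^n}` with
`f(0) = 0`: (i) every element of `S₃` is represented exactly once as an ordered sum `x + y`
with `x, y ∈ S₁`; (ii) every element outside `S₃` is represented either zero times or twice. -/
theorem S1_squares
    (n : ℕ) (hn : 0 < n)
    (f : GaloisField 2 n → GaloisField 2 n)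
    (hpp : ∀ ε : GaloisField 2 n, ε ≠ 0 →
      Function.Bijective (fun x => f (x + ε) + f x + ε * x))
    (hf0 : f 0 = 0) :
    (∀ g ∈ S3 n,
      Nat.card {p : GR n × GR n // p.1 ∈ S1 n f ∧ p.2 ∈ S1 n f ∧ p.1 + p.2 = g} = 1) ∧
    (∀ g : GR n, g ∉ S3 n →
      Nat.card {p : GR n × GR n // p.1 ∈ S1 n f ∧ p.2 ∈ S1 n f ∧ p.1 + p.2 = g} = 0 ∨
      Nat.card {p : GR n × GR n // p.1 ∈ S1 n f ∧ p.2 ∈ S1 n f ∧ p.1 + p.2 = g} = 2) := by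
  have h2 : (2 : GaloisField 2 n) = 0 := fchar2
  have sqinj : ∀ a b : GaloisField 2 n, a ^ 2 = b ^ 2 → a = b := by
    intro a b hab
    have hz : (a - b) ^ 2 = 0 := by
      linear_combination hab + (b ^ 2 - a * b) * h2
    have := (pow_eq_zero_iff (two_ne_zero)).mp hz
    exact sub_eq_zero.mp this
  constructor
  · intro g hg
    rw [Nat.card_congr (solEquiv hn f hf0 g)]
    obtain ⟨h0, h1⟩ := (mem_S3_iff hn g).mp hg
    rw [Nat.card_eq_one_iff_unique]
    have hQsq : ∀ y : GaloisField 2 n,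
        f y + f (y + g.coeff 0) + y * (y + g.coeff 0) = g.coeff 1 → y ^ 2 = g.coeff 1 := by
      intro y hy
      rw [h0, add_zero] at hy
      linear_combination hy - f y * h2
    constructor
    · constructor
      intro a b
      apply Subtype.ext
      exact sqinj _ _ ((hQsq _ a.2.2.2).trans (hQsq _ b.2.2.2).symm)
    · have hx2 : (g.coeff 1 ^ 2 ^ (n - 1)) ^ 2 = g.coeff 1 := fsq hn _
      have hxne : g.coeff 1 ^ 2 ^ (n - 1) ≠ 0 := by
        intro hc
        apply h1
        rw [← hx2, hc]
        ring
      refine ⟨⟨g.coeff 1 ^ 2 ^ (n - 1), hxne, ?_, ?_⟩⟩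
      · rw [h0, add_zero]; exact hxne
      · rw [h0, add_zero]
        linear_combination hx2 + f (g.coeff 1 ^ 2 ^ (n - 1)) * h2
  · intro g hg
    rw [Nat.card_congr (solEquiv hn f hf0 g)]
    rw [mem_S3_iff hn] at hg
    push_neg at hg
    by_cases h0 : g.coeff 0 = 0
    · left
      have h1 : g.coeff 1 = 0 := hg h0
      have : IsEmpty {x : GaloisField 2 n // x ≠ 0 ∧ x + g.coeff 0 ≠ 0 ∧
          f x + f (x + g.coeff 0) + x * (x + g.coeff 0) = g.coeff 1} := by
        refine ⟨fun x => ?_⟩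
        obtain ⟨hx1, _, hx3⟩ := x.2
        simp only [h0, add_zero, h1] at hx3
        have : (x : GaloisField 2 n) ^ 2 = 0 := by
          linear_combination hx3 - f x.1 * h2
        exact hx1 ((pow_eq_zero_iff (two_ne_zero)).mp this)
      exact Nat.card_of_isEmpty
    · rcases isEmpty_or_nonempty {x : GaloisField 2 n // x ≠ 0 ∧ x + g.coeff 0 ≠ 0 ∧
          f x + f (x + g.coeff 0) + x * (x + g.coeff 0) = g.coeff 1} with he | hne
      · left; exact Nat.card_of_isEmpty
      · right
        obtain ⟨⟨x₀, hx1, hx2, hx3⟩⟩ := hne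
        rw [Nat.card_eq_two_iff]
        have e : (x₀ + g.coeff 0) + g.coeff 0 = x₀ := by
          linear_combination g.coeff 0 * h2
        have hy2 : (x₀ + g.coeff 0) + g.coeff 0 ≠ 0 := by rw [e]; exact hx1
        have hy3 : f (x₀ + g.coeff 0) + f ((x₀ + g.coeff 0) + g.coeff 0)
            + (x₀ + g.coeff 0) * ((x₀ + g.coeff 0) + g.coeff 0) = g.coeff 1 := by
          rw [e]
          linear_combination hx3
        refine ⟨⟨x₀, hx1, hx2, hx3⟩, ⟨x₀ + g.coeff 0, hx2, hy2, hy3⟩, ?_, ?_⟩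
        · intro hc
          apply h0
          have hv := congrArg Subtype.val hc
          simp only at hv
          linear_combination -hv
        · rw [Set.eq_univ_iff_forall]
          intro s
          obtain ⟨hs1, hs2, hs3⟩ := s.2
          have hkey := key2to1 f hpp (g.coeff 0) h0 x₀ s.1 (hx3.trans hs3.symm)
          simp only [Set.mem_insert_iff, Set.mem_singleton_iff]
          rcases hkey with hk | hk
          · left; exact Subtype.ext hk
          · right; exact Subtype.ext hk
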